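/- If a subset $H$ of a unital associative algebra $R$ satisfies $\{shr : s,r\in R,\ h\in H\}\subseteq H$ (i.e., $H$ is closed under two-sided multiplication by $R$), then for every $k\ge1$ the Lie centralizer $\mathrm{L}_k(H)$ is a unital subalgebra of $R$. -/

import Mathlib

/-- `lprod r [x₁, …, xₘ]` is the left-normed commutator `[r, x₁, …, xₘ]_{m+1}`. -/
def lprod {R : Type*} [Ring R] (r : R) (l : List R) : R :=
  l.foldl (fun a x => a * x - x * a) r

/-- The `k`-th Lie centralizer of a subset `H` of `R`:
`Lcen k H = {r : R | [r, x₁, …, x_k]_{k+1} = 0 for all xᵢ ∈ H}`. -/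
def Lcen {R : Type*} [Ring R] (k : ℕ) (H : Set R) : Set R :=
  {r : R | ∀ x : Fin k → R, (∀ i, x i ∈ H) → lprod r (List.ofFn x) = 0}

lemma lprod_cons {R : Type*} [Ring R] (r x : R) (l : List R) :
    lprod r (x :: l) = lprod (r * x - x * r) l := rfl

lemma lprod_add {R : Type*} [Ring R] (a b : R) (l : List R) :
    lprod (a + b) l = lprod a l + lprod b l := by
  induction l generalizing a b with
  | nil => rfl
  | cons x t ih =>
    rw [lprod_cons, lprod_cons, lprod_cons, ← ih]
    congr 1
    noncomm_ring

lemma lprod_zero {R : Type*} [Ring R] (l : List R) : lprod (0 : R) l = 0 := by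
  induction l with
  | nil => rfl
  | cons x t ih => rw [lprod_cons]; simpa using ih

lemma lprod_smul {K R : Type*} [Field K] [Ring R] [Algebra K R] (c : K) (a : R) (l : List R) :
    lprod (c • a) l = c • lprod a l := by
  induction l generalizing a with
  | nil => rfl
  | cons x t ih =>
    rw [lprod_cons, lprod_cons, ← ih]
    congr 1
    rw [smul_sub, smul_mul_assoc, mul_smul_comm]

lemma mem_Lcen_iff {R : Type*} [Ring R] {k : ℕ} {H : Set R} {r : R} :
    r ∈ Lcen k H ↔ ∀ l : List R, l.length = k → (∀ x ∈ l, x ∈ H) → lprod r l = 0 := by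
  constructor
  · intro h l hlen hmem
    subst hlen
    have := h l.get (fun i => hmem _ (l.get_mem i))
    simpa [List.ofFn_get] using this
  · intro h x hx
    exact h (List.ofFn x) (by simp) (by
      intro y hy
      rw [List.mem_ofFn] at hy
      obtain ⟨i, rfl⟩ := hy
      exact hx i)

/-- If `H` is closed under two-sided multiplication by `R` (i.e. `s h r ∈ H` for all
`s, r ∈ R`, `h ∈ H`), then every Lie centralizer `L_k(H)` is a unital subalgebra. -/
theorem Lcen_subalgebra_of_ideal_like {K : Type*} [Field K] {R : Type*} [Ring R]
    [Algebra K R] (H : Set R) (hH : ∀ s r : R, ∀ h ∈ H, s * h * r ∈ H)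
    (k : ℕ) (hk : 1 ≤ k) :
    ∃ A : Subalgebra K R, (A : Set R) = Lcen k H := by
  have hone : ∀ l : List R, l.length = k → lprod (1 : R) l = 0 := by
    intro l hlen
    match l, hlen with
    | x :: t, _ => rw [lprod_cons]; simpa using lprod_zero t
    | [], hlen => simp at hlen; omega
  refine ⟨{
    carrier := Lcen k H
    mul_mem' := ?_
    one_mem' := ?_
    add_mem' := ?_
    zero_mem' := ?_
    algebraMap_mem' := ?_ }, rfl⟩
  · intro r s hr hs
    rw [mem_Lcen_iff] at hr hs ⊢
    intro l hlen hmem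
    match l, hlen with
    | [], hlen => simp at hlen; omega
    | x :: t, hlen =>
      have hx : x ∈ H := hmem x List.mem_cons_self
      have ht : ∀ y ∈ t, y ∈ H := fun y hy => hmem y (List.mem_cons_of_mem x hy)
      have key : r * s * x - x * (r * s)
          = (r * (s * x) - (s * x) * r) + (s * (x * r) - (x * r) * s) := by noncomm_ring
      rw [lprod_cons, key, lprod_add, ← lprod_cons, ← lprod_cons]
      have h1 : s * x ∈ H := by simpa using hH s 1 x hx
      have h2 : x * r ∈ H := by simpa using hH 1 r x hx
      rw [hr (s * x :: t) (by simpa using hlen)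
          (by intro y hy; rcases List.mem_cons.mp hy with h | h; exacts [h ▸ h1, ht y h]),
        hs (x * r :: t) (by simpa using hlen)
          (by intro y hy; rcases List.mem_cons.mp hy with h | h; exacts [h ▸ h2, ht y h]),
        add_zero]
  · rw [mem_Lcen_iff]
    intro l hlen _
    exact hone l hlen
  · intro a b ha hb
    rw [mem_Lcen_iff] at ha hb ⊢
    intro l hlen hmem
    rw [lprod_add, ha l hlen hmem, hb l hlen hmem, add_zero]
  · rw [mem_Lcen_iff]
    intro l hlen _
    exact lprod_zero l
  · intro c
    rw [mem_Lcen_iff]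
    intro l hlen _
    rw [Algebra.algebraMap_eq_smul_one, lprod_smul, hone l hlen, smul_zero]
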